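/- If an increasing sequence (u_j) of positive reals satisfies the lacunary condition (L) with constant A > 1 (i.e., u_m · Σ_{j≥m} 1/u_j ≤ A for all m ≥ 1), then for every real t ≠ 0, setting u_0 = 0, one has Σ_{j=1}^∞ max_{u_{j-1} ≤ v ≤ u_j} |∫_{u_{j-1}}^{v} sin(t·u)/u du| ≤ 3A + 4. -/

import Mathlib

open Set Filter MeasureTheory Real
open scoped Topology ENNReal

noncomputable section

/-- Sum of absolute second-order rectangular increments of `f` over the grid `x`, `y`. -/
def vitaliSum (f : ℝ → ℝ → ℝ) (x y : ℕ → ℝ) (n m : ℕ) : ℝ :=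
  ∑ i ∈ Finset.range n, ∑ j ∈ Finset.range m,
    |f (x (i+1)) (y (j+1)) - f (x i) (y (j+1)) - f (x (i+1)) (y j) + f (x i) (y j)|

/-- Vitali variation of `f` over a set `Q ⊆ ℝ²`: the supremum, over compact rectangles
contained in `Q` and partitions of them, of the sum of absolute rectangular increments. -/
def vitaliVar (f : ℝ → ℝ → ℝ) (Q : Set (ℝ × ℝ)) : ℝ≥0∞ :=
  ⨆ (n : ℕ) (m : ℕ) (x : ℕ → ℝ) (y : ℕ → ℝ)
    (_ : ∀ i < n, x i < x (i+1)) (_ : ∀ j < m, y j < y (j+1))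
    (_ : Set.Icc (x 0) (x n) ×ˢ Set.Icc (y 0) (y m) ⊆ Q),
    ENNReal.ofReal (vitaliSum f x y n m)

/-- Bounded variation in the sense of Vitali over `ℝ²`. -/
def BVV (f : ℝ → ℝ → ℝ) : Prop := vitaliVar f Set.univ < ⊤

/-- Bounded variation in the sense of Hardy over `ℝ²`. -/
def BVH (f : ℝ → ℝ → ℝ) : Prop :=
  BVV f ∧ (∀ y, BoundedVariationOn (fun s => f s y) Set.univ) ∧
    (∀ x, BoundedVariationOn (fun s => f x s) Set.univ)

/-- The space `BV_{||0||}(ℝ²)`: Vitali bounded variation and vanishing as `‖(x,y)‖ → ∞`. -/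
def BVzero (f : ℝ → ℝ → ℝ) : Prop :=
  BVV f ∧ Tendsto (fun p : ℝ × ℝ => f p.1 p.2) (cocompact (ℝ × ℝ)) (𝓝 0)

/-- `x`, `y` form a partition of `[a,b] × [c,d]` with `n`, resp. `m`, subintervals. -/
def IsPartition (x y : ℕ → ℝ) (n m : ℕ) (a b c d : ℝ) : Prop :=
  x 0 = a ∧ x n = b ∧ y 0 = c ∧ y m = d ∧
    (∀ i < n, x i < x (i+1)) ∧ (∀ j < m, y j < y (j+1))

/-- The tags `(ξ i j, η i j)` belong to the corresponding subrectangles. -/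
def Tags (x y : ℕ → ℝ) (ξ η : ℕ → ℕ → ℝ) (n m : ℕ) : Prop :=
  ∀ i < n, ∀ j < m,
    ξ i j ∈ Set.Icc (x i) (x (i+1)) ∧ η i j ∈ Set.Icc (y j) (y (j+1))

/-- Riemann–Stieltjes sum of `g` with respect to `f`. -/
def RSSum (g f : ℝ → ℝ → ℝ) (x y : ℕ → ℝ) (ξ η : ℕ → ℕ → ℝ) (n m : ℕ) : ℝ :=
  ∑ i ∈ Finset.range n, ∑ j ∈ Finset.range m,
    g (ξ i j) (η i j) *
      (f (x (i+1)) (y (j+1)) - f (x i) (y (j+1)) - f (x (i+1)) (y j) + f (x i) (y j))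

/-- `g` is Riemann–Stieltjes integrable with respect to `f` over `[a,b] × [c,d]`,
with integral `A` (mesh measured by the diagonals of the subrectangles). -/
def RSIntegralOn (g f : ℝ → ℝ → ℝ) (a b c d A : ℝ) : Prop :=
  ∀ ε > 0, ∃ δ > 0, ∀ (n m : ℕ) (x y : ℕ → ℝ) (ξ η : ℕ → ℕ → ℝ),
    IsPartition x y n m a b c d → Tags x y ξ η n m →
    (∀ i < n, ∀ j < m, Real.sqrt ((x (i+1) - x i)^2 + (y (j+1) - y j)^2) < δ) →
    |RSSum g f x y ξ η n m - A| < ε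

/-- Improper Riemann–Stieltjes integral of `g` with respect to `f` over `ℝ²`,
as a Pringsheim limit over expanding compact rectangles. -/
def ImproperRS (g f : ℝ → ℝ → ℝ) (A : ℝ) : Prop :=
  ∀ ε > 0, ∃ M : ℝ, ∀ a b c d : ℝ, a ≤ -M → M ≤ b → c ≤ -M → M ≤ d →
    ∃ B : ℝ, RSIntegralOn g f a b c d B ∧ |B - A| < ε

/-- Improper Riemann–Stieltjes integral of a complex-valued `G` with respect to `f`,
defined via real and imaginary parts. -/
def ImproperRSC (G : ℝ → ℝ → ℂ) (f : ℝ → ℝ → ℝ) (A : ℂ) : Prop :=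
  ImproperRS (fun s t => (G s t).re) f A.re ∧ ImproperRS (fun s t => (G s t).im) f A.im

/-- Riemann sum of `f` over a tagged partition. -/
def KHSum (f : ℝ → ℝ → ℝ) (x y : ℕ → ℝ) (ξ η : ℕ → ℕ → ℝ) (n m : ℕ) : ℝ :=
  ∑ i ∈ Finset.range n, ∑ j ∈ Finset.range m,
    f (ξ i j) (η i j) * (x (i+1) - x i) * (y (j+1) - y j)

/-- The tagged partition is `δ`-fine for the gauge `δ`. -/
def KHFine (δ : ℝ × ℝ → ℝ) (x y : ℕ → ℝ) (ξ η : ℕ → ℕ → ℝ) (n m : ℕ) : Prop :=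
  ∀ i < n, ∀ j < m,
    Set.Icc (x i) (x (i+1)) ⊆
      Set.Ioo (ξ i j - δ (ξ i j, η i j)) (ξ i j + δ (ξ i j, η i j)) ∧
    Set.Icc (y j) (y (j+1)) ⊆
      Set.Ioo (η i j - δ (ξ i j, η i j)) (η i j + δ (ξ i j, η i j))

/-- `f` is Kurzweil–Henstock integrable over `[a,b] × [c,d]` with integral `A`. -/
def KHIntegralOn (f : ℝ → ℝ → ℝ) (a b c d A : ℝ) : Prop :=
  ∀ ε > 0, ∃ δ : ℝ × ℝ → ℝ, (∀ p, 0 < δ p) ∧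
    ∀ (n m : ℕ) (x y : ℕ → ℝ) (ξ η : ℕ → ℕ → ℝ),
      IsPartition x y n m a b c d → Tags x y ξ η n m → KHFine δ x y ξ η n m →
      |KHSum f x y ξ η n m - A| < ε

/-- Kurzweil–Henstock integrability of a complex-valued function, via components. -/
def KHIntegralOnC (f : ℝ → ℝ → ℂ) (a b c d : ℝ) (A : ℂ) : Prop :=
  KHIntegralOn (fun s t => (f s t).re) a b c d A.re ∧
  KHIntegralOn (fun s t => (f s t).im) a b c d A.im

/-- Pringsheim limit, over expanding compact rectangles, of Kurzweil–Henstock integrals. -/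
def HasKHPringsheim (f : ℝ → ℝ → ℝ) (A : ℝ) : Prop :=
  ∀ ε > 0, ∃ M : ℝ, ∀ a b c d : ℝ, a ≤ -M → M ≤ b → c ≤ -M → M ≤ d →
    ∃ B : ℝ, KHIntegralOn f a b c d B ∧ |B - A| < ε

/-- Complex-valued Pringsheim limit of Kurzweil–Henstock integrals. -/
def HasKHPringsheimC (f : ℝ → ℝ → ℂ) (A : ℂ) : Prop :=
  ∀ ε > 0, ∃ M : ℝ, ∀ a b c d : ℝ, a ≤ -M → M ≤ b → c ≤ -M → M ≤ d →
    ∃ B : ℂ, KHIntegralOnC f a b c d B ∧ ‖B - A‖ < ε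

/-- The kernel `e^{-i(ξ t₁ + η t₂)}`. -/
def fourierKernel (ξ η t₁ t₂ : ℝ) : ℂ :=
  Complex.exp (-Complex.I * ((ξ * t₁ + η * t₂ : ℝ) : ℂ))

/-- `A` is the KP-Fourier transform of `f` at `(ξ, η)`. -/
def HasKPFourier (f : ℝ → ℝ → ℝ) (ξ η : ℝ) (A : ℂ) : Prop :=
  HasKHPringsheimC (fun t₁ t₂ => (f t₁ t₂ : ℂ) * fourierKernel ξ η t₁ t₂) A

/-- The region `{(ξ,η) : α₁ ≤ |ξ| ≤ β₁, α₂ ≤ |η| ≤ β₂}`. -/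
def annulusRect (α₁ β₁ α₂ β₂ : ℝ) : Set (ℝ × ℝ) :=
  {p | α₁ ≤ |p.1| ∧ |p.1| ≤ β₁ ∧ α₂ ≤ |p.2| ∧ |p.2| ≤ β₂}

/-- The kernel `(sin(βt) - sin(αt))/t`, extended by continuity at `t = 0`. -/
def sinKernel (α β t : ℝ) : ℝ :=
  if t = 0 then β - α else (Real.sin (β * t) - Real.sin (α * t)) / t

/-- The kernel `h_{α,β}(t) = (sin(βt) - sin(αt))/(πt)`, extended by continuity at `t = 0`. -/
def sinKernelPi (α β t : ℝ) : ℝ :=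
  if t = 0 then (β - α) / π else (Real.sin (β * t) - Real.sin (α * t)) / (π * t)

/-- `g_{(x,y)}(t₁,t₂) = f(x−t₁,y−t₂) + f(x−t₁,y+t₂) + f(x+t₁,y−t₂) + f(x+t₁,y+t₂)`. -/
def quadSum (f : ℝ → ℝ → ℝ) (x y t₁ t₂ : ℝ) : ℝ :=
  f (x - t₁) (y - t₂) + f (x - t₁) (y + t₂) + f (x + t₁) (y - t₂) + f (x + t₁) (y + t₂)

/-- Lemma (Móricz): if `(u_j)` (with `u_0 = 0`) satisfies the lacunary condition (L) with
constant `A > 1`, then for `t ≠ 0`,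
`Σ_{j≥1} max_{u_{j-1} ≤ v ≤ u_j} |∫_{u_{j-1}}^v sin(tu)/u du| ≤ 3A + 4`
(stated via all partial sums of the nonnegative series). -/
private lemma moricz_integrable (t a b : ℝ) (ha : 0 ≤ a) (hab : a ≤ b) :
    IntervalIntegrable (fun s => Real.sin (t * s) / s) volume a b := by
  rw [intervalIntegrable_iff_integrableOn_Ioc_of_le hab]
  apply Integrable.mono' (g := fun _ => |t|) (integrableOn_const measure_Ioc_lt_top.ne)
  · exact ((measurable_const.mul measurable_id).sin.div measurable_id).aestronglyMeasurable
  · filter_upwards [ae_restrict_mem measurableSet_Ioc] with s hs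
    have hs0 : 0 < s := lt_of_le_of_lt ha hs.1
    rw [Real.norm_eq_abs, abs_div, abs_of_pos hs0, div_le_iff₀ hs0]
    calc |Real.sin (t * s)| ≤ |t * s| := Real.abs_sin_le_abs
    _ = |t| * s := by rw [abs_mul, abs_of_pos hs0]

private lemma moricz_bound1 (t a v : ℝ) (ha : 0 ≤ a) (hav : a ≤ v) :
    |∫ s in a..v, Real.sin (t * s) / s| ≤ |t| * (v - a) := by
  have := intervalIntegral.norm_integral_le_of_norm_le_const
    (C := |t|) (f := fun s => Real.sin (t * s) / s) (a := a) (b := v) ?_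
  · simpa [abs_of_nonneg (sub_nonneg.2 hav)] using this
  intro s hs
  rw [Set.uIoc_of_le hav] at hs
  have hs0 : 0 < s := lt_of_le_of_lt ha hs.1
  rw [Real.norm_eq_abs, abs_div, abs_of_pos hs0, div_le_iff₀ hs0]
  calc |Real.sin (t * s)| ≤ |t * s| := Real.abs_sin_le_abs
  _ = |t| * s := by rw [abs_mul, abs_of_pos hs0]

private lemma moricz_bound2 (t a v : ℝ) (ht : 0 < t) (ha : 0 < a) (hav : a ≤ v) :
    |∫ s in a..v, Real.sin (t * s) / s| ≤ 2 / (t * a) := by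
  have hv : 0 < v := lt_of_lt_of_le ha hav
  set F : ℝ → ℝ := fun s => -Real.cos (t * s) / (t * s) with hF
  have hderiv : ∀ s ∈ Set.uIcc a v, HasDerivAt F
      (Real.sin (t * s) / s + Real.cos (t * s) / (t * s ^ 2)) s := by
    intro s hs
    rw [Set.uIcc_of_le hav] at hs
    have hs0 : 0 < s := lt_of_lt_of_le ha hs.1
    have h1 : HasDerivAt (fun s => -Real.cos (t * s)) (t * Real.sin (t * s)) s := by
      have := ((Real.hasDerivAt_cos (t * s)).comp s ((hasDerivAt_id s).const_mul t)).neg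
      exact this.congr_deriv (by ring)
    have h2 : HasDerivAt (fun s => t * s) t s := by
      simpa using (hasDerivAt_id s).const_mul t
    have := h1.div h2 (by positivity)
    refine this.congr_deriv ?_
    field_simp
    ring
  have hcont : ∀ s ∈ Set.uIcc a v, s ≠ 0 := by
    intro s hs; rw [Set.uIcc_of_le hav] at hs; exact ne_of_gt (lt_of_lt_of_le ha hs.1)
  have hc1 : IntervalIntegrable (fun s => Real.sin (t * s) / s) volume a v :=
    (ContinuousOn.div (Continuous.continuousOn (Real.continuous_sin.comp (continuous_const.mul continuous_id))) continuousOn_id hcont).intervalIntegrable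
  have hc2 : IntervalIntegrable (fun s => Real.cos (t * s) / (t * s ^ 2)) volume a v := by
    apply ContinuousOn.intervalIntegrable
    apply ContinuousOn.div
      (Continuous.continuousOn (Real.continuous_cos.comp (continuous_const.mul continuous_id)))
      (Continuous.continuousOn (continuous_const.mul (continuous_pow 2)))
    intro s hs
    have := hcont s hs
    exact mul_ne_zero ht.ne' (pow_ne_zero 2 this)
  have key : (∫ s in a..v, (Real.sin (t * s) / s + Real.cos (t * s) / (t * s ^ 2))) =
      F v - F a :=
    intervalIntegral.integral_eq_sub_of_hasDerivAt hderiv (hc1.add hc2)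
  rw [intervalIntegral.integral_add hc1 hc2] at key
  have heq : (∫ s in a..v, Real.sin (t * s) / s) =
      F v - F a - ∫ s in a..v, Real.cos (t * s) / (t * s ^ 2) := by linarith
  -- bound the second integral
  have hG : ∀ s ∈ Set.uIcc a v, HasDerivAt (fun s => -(1 / (t * s))) (1 / (t * s ^ 2)) s := by
    intro s hs
    have hs0 : s ≠ 0 := hcont s hs
    have h2 : HasDerivAt (fun s => t * s) t s := by
      simpa using (hasDerivAt_id s).const_mul t
    have := ((hasDerivAt_const s (1:ℝ)).div h2 (by positivity)).neg
    refine this.congr_deriv ?_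
    field_simp
    ring
  have hc3 : IntervalIntegrable (fun s => 1 / (t * s ^ 2)) volume a v := by
    apply ContinuousOn.intervalIntegrable
    apply ContinuousOn.div continuousOn_const (Continuous.continuousOn (continuous_const.mul (continuous_pow 2)))
    intro s hs
    have := hcont s hs
    exact mul_ne_zero ht.ne' (pow_ne_zero 2 this)
  have hGint : (∫ s in a..v, 1 / (t * s ^ 2)) = 1 / (t * a) - 1 / (t * v) := by
    rw [intervalIntegral.integral_eq_sub_of_hasDerivAt hG hc3]
    ring
  have hb2 : |∫ s in a..v, Real.cos (t * s) / (t * s ^ 2)| ≤ 1 / (t * a) - 1 / (t * v) := by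
    have := intervalIntegral.norm_integral_le_abs_of_norm_le (μ := volume) (a := a) (b := v)
      (f := fun s => Real.cos (t * s) / (t * s ^ 2)) (g := fun s => 1 / (t * s ^ 2)) ?_ hc3
    · rw [hGint] at this
      have hle : 1 / (t * v) ≤ 1 / (t * a) :=
        one_div_le_one_div_of_le (by positivity) (by nlinarith)
      rwa [abs_of_nonneg (sub_nonneg.2 hle)] at this
    filter_upwards [ae_restrict_mem measurableSet_uIoc] with s hs
    rw [Set.uIoc_of_le hav] at hs
    have hs0 : 0 < s := lt_trans ha hs.1
    rw [Real.norm_eq_abs, abs_div, abs_of_pos (by positivity : (0:ℝ) < t * s ^ 2)]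
    gcongr <;> first | exact Real.abs_cos_le_one _ | positivity
  have hFv : |F v| ≤ 1 / (t * v) := by
    rw [hF]
    rw [abs_div, abs_of_pos (by positivity : (0:ℝ) < t * v), abs_neg]
    gcongr <;> first | exact Real.abs_cos_le_one _ | positivity
  have hFa : |F a| ≤ 1 / (t * a) := by
    rw [hF]
    rw [abs_div, abs_of_pos (by positivity : (0:ℝ) < t * a), abs_neg]
    gcongr <;> first | exact Real.abs_cos_le_one _ | positivity
  rw [heq]
  have h1 := abs_sub (F v - F a) (∫ s in a..v, Real.cos (t * s) / (t * s ^ 2))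
  have h2 := abs_sub (F v) (F a)
  have h3 : 2 / (t * a) = 1 / (t * v) + 1 / (t * a) + (1 / (t * a) - 1 / (t * v)) := by ring
  linarith

private lemma moricz_core (u : ℕ → ℝ) (h0 : u 0 = 0) (hmono : StrictMono u)
    (hpos : ∀ j, 1 ≤ j → 0 < u j) (A : ℝ) (hA : 1 < A)
    (hsum : Summable fun j : ℕ => 1 / u (j + 1))
    (hL : ∀ m : ℕ, 1 ≤ m → u m * ∑' j : ℕ, 1 / u (m + j) ≤ A)
    (t : ℝ) (ht : 0 < t) (n : ℕ) :
    ∑ j ∈ Finset.range n,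
      sSup ((fun v : ℝ => |∫ s in (u j)..v, Real.sin (t * s) / s|) ''
        Set.Icc (u j) (u (j + 1))) ≤ 3 * A + 4 := by
  have hu0 : ∀ j, 0 ≤ u j := fun j => h0 ▸ hmono.monotone (Nat.zero_le j)
  have hlt : ∀ j, u j < u (j + 1) := fun j => hmono (Nat.lt_succ_self j)
  set T : ℕ → ℝ := fun j =>
    sSup ((fun v : ℝ => |∫ s in (u j)..v, Real.sin (t * s) / s|) ''
      Set.Icc (u j) (u (j + 1))) with hT
  have hne : ∀ j, ((fun v : ℝ => |∫ s in (u j)..v, Real.sin (t * s) / s|) ''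
      Set.Icc (u j) (u (j + 1))).Nonempty :=
    fun j => ⟨_, ⟨u j, ⟨le_refl _, (hlt j).le⟩, rfl⟩⟩
  have hT1 : ∀ j, T j ≤ t * (u (j + 1) - u j) := by
    intro j
    apply csSup_le (hne j)
    rintro x ⟨v, hv, rfl⟩
    calc |∫ s in (u j)..v, Real.sin (t * s) / s| ≤ |t| * (v - u j) :=
          moricz_bound1 t (u j) v (hu0 j) hv.1
    _ = t * (v - u j) := by rw [abs_of_pos ht]
    _ ≤ t * (u (j + 1) - u j) := by nlinarith [hv.2]
  have hT2 : ∀ j, 0 < u j → T j ≤ 2 / (t * u j) := by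
    intro j hj
    apply csSup_le (hne j)
    rintro x ⟨v, hv, rfl⟩
    exact moricz_bound2 t (u j) v ht hj hv.1
  -- existence of J
  have hex : ∃ j : ℕ, 1 / t < u (j + 1) := by
    have h1 := hsum.tendsto_atTop_zero.eventually_lt_const ht
    obtain ⟨j, hj⟩ := h1.exists
    refine ⟨j, ?_⟩
    have hup : 0 < u (j + 1) := hpos _ (by omega)
    rw [div_lt_iff₀ hup] at hj
    rw [div_lt_iff₀ ht]
    nlinarith
  set J := Nat.find hex with hJdef
  have hJ1 : 1 / t < u (J + 1) := Nat.find_spec hex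
  have hJle : u J ≤ 1 / t := by
    rcases Nat.eq_zero_or_pos J with h | h
    · rw [h, h0]; positivity
    · have h2 := Nat.find_min hex (m := J - 1) (by omega)
      rw [not_lt] at h2
      have h3 : J - 1 + 1 = J := by omega
      rwa [h3] at h2
  have htinv : 0 < 1 / t := by positivity
  have htJ : t * u J ≤ 1 := by
    have := mul_le_mul_of_nonneg_left hJle ht.le
    rwa [mul_one_div, div_self ht.ne'] at this
  -- crossing bound
  have hTJ : T J ≤ 3 := by
    apply csSup_le (hne J)
    rintro x ⟨v, hv, rfl⟩
    show |∫ s in (u J)..v, Real.sin (t * s) / s| ≤ 3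
    by_cases hvw : v ≤ 1 / t
    · calc |∫ s in (u J)..v, Real.sin (t * s) / s| ≤ |t| * (v - u J) :=
            moricz_bound1 t (u J) v (hu0 J) hv.1
      _ = t * (v - u J) := by rw [abs_of_pos ht]
      _ ≤ t * (1 / t) := by nlinarith [hu0 J]
      _ ≤ 3 := by rw [mul_one_div, div_self ht.ne']; norm_num
    · push_neg at hvw
      have hIa := moricz_integrable t (u J) (1 / t) (hu0 J) hJle
      have hIb := moricz_integrable t (1 / t) v htinv.le hvw.le
      have hadd := intervalIntegral.integral_add_adjacent_intervals hIa hIb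
      rw [← hadd]
      calc |(∫ s in (u J)..(1/t), Real.sin (t * s) / s) +
              ∫ s in (1/t)..v, Real.sin (t * s) / s|
          ≤ |∫ s in (u J)..(1/t), Real.sin (t * s) / s| +
              |∫ s in (1/t)..v, Real.sin (t * s) / s| := abs_add_le _ _
      _ ≤ |t| * (1 / t - u J) + 2 / (t * (1 / t)) := by
            gcongr
            · exact moricz_bound1 t (u J) (1 / t) (hu0 J) hJle
            · exact moricz_bound2 t (1 / t) v ht htinv hvw.le
      _ ≤ 3 := by
            rw [abs_of_pos ht, mul_one_div, div_self ht.ne']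
            have : t * (1 / t - u J) ≤ 1 := by
              rw [mul_sub, mul_one_div, div_self ht.ne']; nlinarith [hu0 J]
            linarith
  -- telescoping bound
  have htel : ∀ m : ℕ, ∑ j ∈ Finset.range m, T j ≤ t * u m := by
    intro m
    calc ∑ j ∈ Finset.range m, T j ≤ ∑ j ∈ Finset.range m, t * (u (j + 1) - u j) :=
          Finset.sum_le_sum fun j _ => hT1 j
    _ = t * ∑ j ∈ Finset.range m, (u (j + 1) - u j) := by rw [Finset.mul_sum]
    _ = t * (u m - u 0) := by rw [Finset.sum_range_sub]
    _ = t * u m := by rw [h0, sub_zero]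
  rcases le_or_gt n J with hnJ | hJn
  · calc ∑ j ∈ Finset.range n, T j ≤ t * u n := htel n
    _ ≤ t * u J := by nlinarith [hmono.monotone hnJ]
    _ ≤ 1 := htJ
    _ ≤ 3 * A + 4 := by nlinarith
  · -- split the sum
    have hsplit : ∑ j ∈ Finset.range n, T j =
        (∑ j ∈ Finset.range J, T j) + T J + ∑ j ∈ Finset.Ico (J + 1) n, T j := by
      rw [Finset.range_eq_Ico, ← Finset.sum_Ico_consecutive _ (Nat.zero_le (J + 1)) hJn,
        ← Finset.range_eq_Ico, Finset.sum_range_succ]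
    rw [hsplit]
    have hS1 : ∑ j ∈ Finset.range J, T j ≤ 1 := (htel J).trans htJ
    -- tail bound
    have huJ1 : 0 < u (J + 1) := lt_trans htinv hJ1
    have hSsum : Summable fun k : ℕ => 1 / u (J + 1 + k) := by
      have := (summable_nat_add_iff J).mpr hsum
      refine this.congr fun k => ?_
      congr 2
      omega
    have htsum : ∑' k : ℕ, 1 / u (J + 1 + k) ≤ A / u (J + 1) := by
      rw [le_div_iff₀ huJ1]
      have := hL (J + 1) (by omega)
      linarith [this, mul_comm (u (J + 1)) (∑' k : ℕ, 1 / u (J + 1 + k))]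
    have hS3 : ∑ j ∈ Finset.Ico (J + 1) n, T j ≤ 2 * A := by
      have hstep : ∑ j ∈ Finset.Ico (J + 1) n, T j ≤
          ∑ j ∈ Finset.Ico (J + 1) n, (2 / t) * (1 / u j) := by
        apply Finset.sum_le_sum
        intro j hj
        have hjm : J + 1 ≤ j := (Finset.mem_Ico.mp hj).1
        have huj : 0 < u j := lt_of_lt_of_le huJ1 (hmono.monotone hjm)
        calc T j ≤ 2 / (t * u j) := hT2 j huj
        _ = (2 / t) * (1 / u j) := by field_simp
      have hreindex : ∑ j ∈ Finset.Ico (J + 1) n, (1 / u j) =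
          ∑ k ∈ Finset.range (n - (J + 1)), 1 / u (J + 1 + k) :=
        Finset.sum_Ico_eq_sum_range _ _ _
      have hle : ∑ j ∈ Finset.Ico (J + 1) n, (1 / u j) ≤ A / u (J + 1) := by
        rw [hreindex]
        refine le_trans (Summable.sum_le_tsum _ (fun k _ => by have := hpos (J + 1 + k) (by omega); positivity) hSsum) htsum
      have h2t : (0:ℝ) ≤ 2 / t := by positivity
      calc ∑ j ∈ Finset.Ico (J + 1) n, T j ≤
            (2 / t) * ∑ j ∈ Finset.Ico (J + 1) n, (1 / u j) := by
            rw [← Finset.mul_sum] at hstep; exact hstep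
      _ ≤ (2 / t) * (A / u (J + 1)) := by gcongr
      _ = 2 * A / (t * u (J + 1)) := by ring
      _ ≤ 2 * A := by
            have h1tu : (1:ℝ) ≤ t * u (J + 1) := by
              rw [div_lt_iff₀ ht] at hJ1; nlinarith
            exact div_le_self (by nlinarith) h1tu
    linarith

theorem stmt0 (u : ℕ → ℝ) (h0 : u 0 = 0) (hmono : StrictMono u)
    (hpos : ∀ j, 1 ≤ j → 0 < u j) (A : ℝ) (hA : 1 < A)
    (hsum : Summable fun j : ℕ => 1 / u (j + 1))
    (hL : ∀ m : ℕ, 1 ≤ m → u m * ∑' j : ℕ, 1 / u (m + j) ≤ A)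
    (t : ℝ) (ht : t ≠ 0) :
    ∀ n : ℕ, ∑ j ∈ Finset.range n,
      sSup ((fun v : ℝ => |∫ s in (u j)..v, Real.sin (t * s) / s|) ''
        Set.Icc (u j) (u (j + 1))) ≤ 3 * A + 4 := by
  intro n
  rcases ht.lt_or_gt with htn | htp
  · have h := moricz_core u h0 hmono hpos A hA hsum hL (-t) (by linarith) n
    simpa [neg_mul, Real.sin_neg, neg_div, intervalIntegral.integral_neg, abs_neg] using h
  · exact moricz_core u h0 hmono hpos A hA hsum hL t htp n
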